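/- Strong duality: if g : ℝⁿ → ℝ is closed, proper, and strongly convex, and 𝒱 ⊆ ℝⁿ is a nonempty finite set, then min_{x ∈ ℝⁿ} (g(x) + max_{w ∈ 𝒱} ⟨w, x⟩) = max_{w ∈ conv(𝒱)} (−g*(−w)), and both optima are attained. -/

import Mathlib

open scoped RealInnerProductSpace

/-- The Fenchel conjugate (real-valued; the supremum is finite and attained when `g` is
strongly convex). -/
noncomputable def fenchel {n : ℕ} (g : EuclideanSpace ℝ (Fin n) → ℝ)
    (w : EuclideanSpace ℝ (Fin n)) : ℝ :=
  ⨆ x, (⟪w, x⟫ - g x)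

set_option maxHeartbeats 1000000 in
/-- Strong duality: if `g : ℝⁿ → ℝ` is closed, proper and strongly convex and `𝒱 ⊆ ℝⁿ`
is a nonempty finite set, then
`min_x (g x + max_{w ∈ 𝒱} ⟪w, x⟫) = max_{w ∈ conv 𝒱} (-g*(-w))` and both optima are
attained. -/
theorem stmt6 {n : ℕ} (g : EuclideanSpace ℝ (Fin n) → ℝ)
    (hlsc : LowerSemicontinuous g)
    (hsc : ∃ α > (0 : ℝ), ConvexOn ℝ Set.univ (fun x => g x - α / 2 * ‖x‖ ^ 2))
    (V : Finset (EuclideanSpace ℝ (Fin n))) (hV : V.Nonempty) :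
    ∃ xstar : EuclideanSpace ℝ (Fin n),
      ∃ wstar ∈ convexHull ℝ (V : Set (EuclideanSpace ℝ (Fin n))),
        (∀ y, g xstar + V.sup' hV (fun w => ⟪w, xstar⟫) ≤
              g y + V.sup' hV (fun w => ⟪w, y⟫)) ∧
        (∀ w ∈ convexHull ℝ (V : Set (EuclideanSpace ℝ (Fin n))),
            -(fenchel g (-w)) ≤ -(fenchel g (-wstar))) ∧
        g xstar + V.sup' hV (fun w => ⟪w, xstar⟫) = -(fenchel g (-wstar)) := by
  classical
  obtain ⟨α, hα, hconv⟩ := hsc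
  obtain ⟨h, hh⟩ : ∃ h' : EuclideanSpace ℝ (Fin n) → ℝ,
      h' = fun x => g x - α / 2 * ‖x‖ ^ 2 := ⟨_, rfl⟩
  have hconvh : ConvexOn ℝ Set.univ h := by rw [hh]; exact hconv
  -- g is continuous
  have hh_cont : Continuous h := hconvh.locallyLipschitz.continuous
  have hg_cont : Continuous g := by
    have hge : g = fun x => h x + α / 2 * ‖x‖ ^ 2 := by funext x; rw [hh]; ring
    rw [hge]; fun_prop
  have hgx_eq : ∀ x, g x = h x + α / 2 * ‖x‖ ^ 2 := by
    intro x; rw [hh]; ring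
  -- lower bound on h
  have hCex : ∃ C : ℝ, 0 ≤ C ∧ ∀ x : EuclideanSpace ℝ (Fin n), -(C * (‖x‖ + 1)) ≤ h x := by
    obtain ⟨x₀, _, hx₀min⟩ := (isCompact_closedBall (0 : EuclideanSpace ℝ (Fin n)) 1).exists_isMinOn
      ⟨0, by simp⟩ hh_cont.continuousOn
    refine ⟨|h x₀| + |h 0|, by positivity, fun x => ?_⟩
    rcases le_or_gt ‖x‖ 1 with hx | hx
    · have h1 : h x₀ ≤ h x := hx₀min (by simpa [Metric.mem_closedBall] using hx)
      have h2 : -|h x₀| ≤ h x₀ := neg_abs_le _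
      nlinarith [abs_nonneg (h x₀), abs_nonneg (h 0), norm_nonneg x,
        mul_nonneg (add_nonneg (abs_nonneg (h x₀)) (abs_nonneg (h 0))) (norm_nonneg x)]
    · have hxpos : (0:ℝ) < ‖x‖ := by linarith
      obtain ⟨t, htdef⟩ : ∃ t : ℝ, t = 1 / ‖x‖ := ⟨_, rfl⟩
      have ht0 : 0 < t := by rw [htdef]; positivity
      have ht1 : t ≤ 1 := by rw [htdef, div_le_one hxpos]; linarith
      have hcomb := hconvh.2 (Set.mem_univ x) (Set.mem_univ (0 : EuclideanSpace ℝ (Fin n)))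
        (le_of_lt ht0) (by linarith : (0:ℝ) ≤ 1 - t) (by ring)
      simp only [smul_eq_mul] at hcomb
      have hmem : t • x + (1 - t) • (0 : EuclideanSpace ℝ (Fin n)) = t • x := by simp
      rw [hmem] at hcomb
      have hu : ‖t • x‖ = 1 := by
        rw [norm_smul, htdef, Real.norm_eq_abs, abs_of_pos (by positivity : (0:ℝ) < 1/‖x‖)]
        field_simp
      have hlow : h x₀ ≤ h (t • x) := hx₀min (by simp [Metric.mem_closedBall, hu])
      have hkey : -(|h x₀| + |h 0|) ≤ t * h x := by
        have h2 : -|h x₀| ≤ h (t • x) := le_trans (neg_abs_le _) hlow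
        have h3 : -|h 0| ≤ h 0 := neg_abs_le _
        have h3' : h 0 ≤ |h 0| := le_abs_self _
        nlinarith
      have hxt : t * ‖x‖ = 1 := by rw [htdef]; field_simp
      have h5 : ‖x‖ * (-(|h x₀| + |h 0|)) ≤ ‖x‖ * (t * h x) :=
        mul_le_mul_of_nonneg_left hkey hxpos.le
      have h6 : ‖x‖ * (t * h x) = h x := by
        rw [← mul_assoc, mul_comm ‖x‖ t, hxt, one_mul]
      rw [h6] at h5
      nlinarith [abs_nonneg (h x₀), abs_nonneg (h 0)]
  obtain ⟨C, hC0, hClow⟩ := hCex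
  -- existence of minimizers of x ↦ g x + ⟪w, x⟫
  have hexists : ∀ w : EuclideanSpace ℝ (Fin n),
      ∃ x, ∀ y, g x + ⟪w, x⟫ ≤ g y + ⟪w, y⟫ := by
    intro w
    have hmc : Continuous fun x : EuclideanSpace ℝ (Fin n) => g x + ⟪w, x⟫ :=
      hg_cont.add (continuous_const.inner continuous_id)
    apply hmc.exists_forall_le
    have hbound : ∀ x : EuclideanSpace ℝ (Fin n),
        α / 2 * ‖x‖ ^ 2 - (C + ‖w‖) * ‖x‖ - C ≤ g x + ⟪w, x⟫ := by
      intro x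
      have h1 := hClow x
      have h2 : -(‖w‖ * ‖x‖) ≤ ⟪w, x⟫ := by
        linarith [abs_real_inner_le_norm w x, neg_abs_le ⟪w, x⟫]
      rw [hgx_eq x]
      nlinarith
    have htend : Filter.Tendsto (fun r : ℝ => α / 2 * r ^ 2 - (C + ‖w‖) * r - C)
        Filter.atTop Filter.atTop := by
      rw [Filter.tendsto_atTop]
      intro b
      filter_upwards [Filter.eventually_ge_atTop (max 1 (2 * (|b| + C + (C + ‖w‖) + 1) / α))]
        with r hr
      have hr1 : (1:ℝ) ≤ r := le_trans (le_max_left _ _) hr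
      have hr2' : 2 * (|b| + C + (C + ‖w‖) + 1) ≤ α * r := by
        have hr2 := le_trans (le_max_right _ _) hr
        rw [div_le_iff₀ hα] at hr2; linarith
      have hb : b ≤ |b| := le_abs_self b
      nlinarith [abs_nonneg b, norm_nonneg w]
    refine Filter.tendsto_atTop_mono ?_ (htend.comp tendsto_norm_cocompact_atTop)
    intro x; exact hbound x
  choose xmin hxmin using hexists
  obtain ⟨φ, hφ⟩ : ∃ φ' : EuclideanSpace ℝ (Fin n) → ℝ,
      φ' = fun w => g (xmin w) + ⟪w, xmin w⟫ := ⟨_, rfl⟩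
  have hφ_app : ∀ w, φ w = g (xmin w) + ⟪w, xmin w⟫ := fun w => by rw [hφ]
  -- strong convexity quadratic growth at a minimizer
  have key : ∀ (w x0 : EuclideanSpace ℝ (Fin n)), (∀ y, g x0 + ⟪w, x0⟫ ≤ g y + ⟪w, y⟫) →
      ∀ x, g x0 + ⟪w, x0⟫ + α / 2 * ‖x - x0‖ ^ 2 ≤ g x + ⟪w, x⟫ := by
    intro w x0 hmin x
    by_contra hcon
    push_neg at hcon
    obtain ⟨q, hq⟩ : ∃ q' : EuclideanSpace ℝ (Fin n) → ℝ,
        q' = fun y => g y + ⟪w, y⟫ - α / 2 * ‖y - x0‖ ^ 2 := ⟨_, rfl⟩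
    have hq_app : ∀ y, q y = g y + ⟪w, y⟫ - α / 2 * ‖y - x0‖ ^ 2 := fun y => by rw [hq]
    have hq_convex : ConvexOn ℝ Set.univ q := by
      have hlin : ConvexOn ℝ Set.univ
          (fun y : EuclideanSpace ℝ (Fin n) => ⟪w + α • x0, y⟫ - α / 2 * ‖x0‖ ^ 2) := by
        refine ⟨convex_univ, fun x' _ y' _ a b ha hb hab => le_of_eq ?_⟩
        simp only [smul_eq_mul, inner_add_right, real_inner_smul_right]
        linear_combination (α / 2 * ‖x0‖ ^ 2) * hab
      have hsum := hconvh.add hlin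
      refine hsum.congr fun y _ => ?_
      have hns : ‖y - x0‖ ^ 2 = ‖y‖ ^ 2 - 2 * ⟪y, x0⟫ + ‖x0‖ ^ 2 := norm_sub_sq_real y x0
      simp only [hq, hh, Pi.add_apply, inner_add_left, real_inner_smul_left]
      rw [hns, real_inner_comm y x0]
      ring
    have hqx : q x < q x0 := by
      rw [hq_app, hq_app]
      simp only [sub_self, norm_zero]
      nlinarith
    have hδ0 : 0 < q x0 - q x := by linarith
    have hD0 : 0 < ‖x - x0‖ ^ 2 := by
      rcases eq_or_ne x x0 with rfl | hne
      · exfalso; exact lt_irrefl _ hqx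
      · exact pow_pos (norm_pos_iff.2 (sub_ne_zero.2 hne)) 2
    obtain ⟨t, ht⟩ : ∃ t : ℝ, t = min 1 ((q x0 - q x) / (α * ‖x - x0‖ ^ 2)) := ⟨_, rfl⟩
    have ht0 : 0 < t := by rw [ht]; exact lt_min one_pos (by positivity)
    have ht1 : t ≤ 1 := by rw [ht]; exact min_le_left _ _
    have ht2' : t * (α * ‖x - x0‖ ^ 2) ≤ q x0 - q x := by
      rw [← le_div_iff₀ (by positivity)]
      rw [ht]; exact min_le_right _ _
    have hzq : q ((1 - t) • x0 + t • x) ≤ (1 - t) * q x0 + t * q x :=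
      hq_convex.2 (Set.mem_univ x0) (Set.mem_univ x) (by linarith) (le_of_lt ht0) (by ring)
    have hzx0 : (1 - t) • x0 + t • x - x0 = t • (x - x0) := by module
    have hznorm : ‖(1 - t) • x0 + t • x - x0‖ ^ 2 = t ^ 2 * ‖x - x0‖ ^ 2 := by
      rw [hzx0, norm_smul, mul_pow, Real.norm_eq_abs, sq_abs]
    have hmz : g x0 + ⟪w, x0⟫ ≤ g ((1 - t) • x0 + t • x) + ⟪w, (1 - t) • x0 + t • x⟫ :=
      hmin _
    have hqz := hq_app ((1 - t) • x0 + t • x)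
    rw [hznorm] at hqz
    have hqx0 := hq_app x0
    simp only [sub_self, norm_zero] at hqx0
    -- t (q x0 - q x) ≤ α/2 t² D
    have hkey2 : t * (q x0 - q x) ≤ α / 2 * t ^ 2 * ‖x - x0‖ ^ 2 := by nlinarith
    nlinarith [mul_le_mul_of_nonneg_left ht2' (le_of_lt ht0), mul_pos ht0 hδ0]
  -- fenchel identity
  have hfen : ∀ w : EuclideanSpace ℝ (Fin n), -(fenchel g (-w)) = φ w := by
    intro w
    have hub : ∀ x : EuclideanSpace ℝ (Fin n), ⟪-w, x⟫ - g x ≤ -(φ w) := by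
      intro x
      have := hxmin w x
      rw [inner_neg_left, hφ_app]
      linarith
    have hbdd : BddAbove (Set.range fun x : EuclideanSpace ℝ (Fin n) => ⟪-w, x⟫ - g x) := by
      refine ⟨-(φ w), ?_⟩
      rintro _ ⟨x, rfl⟩
      exact hub x
    have heq : fenchel g (-w) = -(φ w) := by
      apply le_antisymm
      · exact ciSup_le hub
      · have hle := le_ciSup hbdd (xmin w)
        have hvv : ⟪-w, xmin w⟫ - g (xmin w) = -(φ w) := by
          rw [inner_neg_left, hφ_app]; ring
        rw [hvv] at hle
        exact hle
    rw [heq, neg_neg]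
  -- φ is concave, hence continuous
  have hφ_concave : ConcaveOn ℝ Set.univ φ := by
    refine ⟨convex_univ, fun w1 _ w2 _ a b ha hb hab => ?_⟩
    have h1 : g (xmin w1) + ⟪w1, xmin w1⟫ ≤
        g (xmin (a • w1 + b • w2)) + ⟪w1, xmin (a • w1 + b • w2)⟫ := hxmin w1 _
    have h2 : g (xmin w2) + ⟪w2, xmin w2⟫ ≤
        g (xmin (a • w1 + b • w2)) + ⟪w2, xmin (a • w1 + b • w2)⟫ := hxmin w2 _
    have he : a * g (xmin (a • w1 + b • w2)) + b * g (xmin (a • w1 + b • w2)) =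
        g (xmin (a • w1 + b • w2)) := by rw [← add_mul, hab, one_mul]
    simp only [hφ_app, smul_eq_mul]
    rw [inner_add_left, real_inner_smul_left, real_inner_smul_left]
    linarith [mul_le_mul_of_nonneg_left h1 ha, mul_le_mul_of_nonneg_left h2 hb, he]
  have hφ_cont : Continuous φ := hφ_concave.locallyLipschitz.continuous
  -- maximize φ over conv V
  have hKcomp : IsCompact (convexHull ℝ (V : Set (EuclideanSpace ℝ (Fin n)))) :=
    V.finite_toSet.isCompact_convexHull ℝ
  have hKne : (convexHull ℝ (V : Set (EuclideanSpace ℝ (Fin n)))).Nonempty := by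
    obtain ⟨v, hv⟩ := hV
    exact ⟨v, subset_convexHull ℝ _ hv⟩
  obtain ⟨wstar, hwstarK, hwstarmax⟩ := hKcomp.exists_isMaxOn hKne hφ_cont.continuousOn
  have hmax : ∀ w ∈ convexHull ℝ (V : Set (EuclideanSpace ℝ (Fin n))), φ w ≤ φ wstar :=
    fun w hw => hwstarmax hw
  -- halfspace bound
  have hsup_bound : ∀ (x : EuclideanSpace ℝ (Fin n)),
      ∀ w ∈ convexHull ℝ (V : Set (EuclideanSpace ℝ (Fin n))),
      ⟪w, x⟫ ≤ V.sup' hV (fun v => ⟪v, x⟫) := by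
    intro x w hw
    have hlin : IsLinearMap ℝ (fun w : EuclideanSpace ℝ (Fin n) => ⟪w, x⟫) :=
      ⟨fun a b => by rw [inner_add_left], fun c y => by rw [real_inner_smul_left, smul_eq_mul]⟩
    have hcvx : Convex ℝ {w : EuclideanSpace ℝ (Fin n) | ⟪w, x⟫ ≤ V.sup' hV (fun v => ⟪v, x⟫)} :=
      convex_halfSpace_le hlin _
    have hsub : (V : Set (EuclideanSpace ℝ (Fin n))) ⊆
        {w : EuclideanSpace ℝ (Fin n) | ⟪w, x⟫ ≤ V.sup' hV (fun v => ⟪v, x⟫)} := by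
      intro v hv
      exact Finset.le_sup' (fun v => ⟪v, x⟫) (Finset.mem_coe.1 hv)
    exact convexHull_min hsub hcvx hw
  -- Danskin: ∀ v ∈ V, ⟪v, xmin wstar⟫ ≤ ⟪wstar, xmin wstar⟫
  have hdanskin : ∀ v ∈ V, ⟪v, xmin wstar⟫ ≤ ⟪wstar, xmin wstar⟫ := by
    intro v hvV
    have hvK : v ∈ convexHull ℝ (V : Set (EuclideanSpace ℝ (Fin n))) :=
      subset_convexHull ℝ _ hvV
    apply le_of_forall_pos_le_add
    intro ε hε
    rcases eq_or_lt_of_le (norm_nonneg (v - wstar)) with hN0 | hN0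
    · have hvw : v = wstar := sub_eq_zero.1 (by rw [← norm_eq_zero]; exact hN0.symm)
      rw [hvw]; linarith
    · obtain ⟨δ, hδdef⟩ : ∃ δ : ℝ, δ = ε / ‖v - wstar‖ := ⟨_, rfl⟩
      have hδ0 : 0 < δ := by rw [hδdef]; positivity
      obtain ⟨t, htdef⟩ : ∃ t : ℝ,
          t = min 1 (α * δ ^ 2 / (2 * ‖v - wstar‖ * (‖xmin wstar‖ + δ))) := ⟨_, rfl⟩
      have ht0 : 0 < t := by rw [htdef]; exact lt_min one_pos (by positivity)
      have ht1 : t ≤ 1 := by rw [htdef]; exact min_le_left _ _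
      have ht2 : t * (2 * ‖v - wstar‖ * (‖xmin wstar‖ + δ)) ≤ α * δ ^ 2 := by
        rw [← le_div_iff₀ (by positivity), htdef]
        exact min_le_right _ _
      have hwtK : wstar + t • (v - wstar) ∈ convexHull ℝ (V : Set (EuclideanSpace ℝ (Fin n))) := by
        have hcv : Convex ℝ (convexHull ℝ (V : Set (EuclideanSpace ℝ (Fin n)))) :=
          convex_convexHull ℝ _
        have hmem := hcv hwstarK hvK (by linarith : (0:ℝ) ≤ 1 - t) (le_of_lt ht0) (by ring)
        have heqw : (1 - t) • wstar + t • v = wstar + t • (v - wstar) := by module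
        rwa [heqw] at hmem
      -- abbreviations (plain terms)
      have h1 : φ (wstar + t • (v - wstar)) ≤ φ wstar := hmax _ hwtK
      rw [hφ_app, hφ_app] at h1
      have h2 : g (xmin wstar) + ⟪wstar, xmin wstar⟫ ≤
          g (xmin (wstar + t • (v - wstar))) + ⟪wstar, xmin (wstar + t • (v - wstar))⟫ :=
        hxmin wstar _
      have hinn : ⟪wstar + t • (v - wstar), xmin (wstar + t • (v - wstar))⟫ =
          ⟪wstar, xmin (wstar + t • (v - wstar))⟫ +
            t * ⟪v - wstar, xmin (wstar + t • (v - wstar))⟫ := by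
        rw [inner_add_left, real_inner_smul_left]
      rw [hinn] at h1
      have h4 := key wstar (xmin wstar) (hxmin wstar) (xmin (wstar + t • (v - wstar)))
      -- set short names
      obtain ⟨r, hr⟩ : ∃ r : ℝ, r = ‖xmin (wstar + t • (v - wstar)) - xmin wstar‖ := ⟨_, rfl⟩
      have hr0 : 0 ≤ r := by rw [hr]; exact norm_nonneg _
      obtain ⟨I, hI⟩ : ∃ I : ℝ, I = ⟪v - wstar, xmin (wstar + t • (v - wstar))⟫ := ⟨_, rfl⟩
      rw [← hI] at h1
      rw [← hr] at h4
      -- hA : α/2 r² + t I ≤ 0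
      have hA : α / 2 * r ^ 2 + t * I ≤ 0 := by linarith
      have hInn : |I| ≤ ‖v - wstar‖ * ‖xmin (wstar + t • (v - wstar))‖ := by
        rw [hI]; exact abs_real_inner_le_norm _ _
      have hxtnorm : ‖xmin (wstar + t • (v - wstar))‖ ≤ ‖xmin wstar‖ + r := by
        rw [hr]
        have := norm_sub_norm_le (xmin (wstar + t • (v - wstar))) (xmin wstar)
        linarith [le_abs_self (‖xmin (wstar + t • (v - wstar))‖ - ‖xmin wstar‖)]
      have hquad : α / 2 * r ^ 2 ≤ t * ‖v - wstar‖ * (‖xmin wstar‖ + r) := by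
        have hIlow : -I ≤ ‖v - wstar‖ * ‖xmin (wstar + t • (v - wstar))‖ := by
          linarith [neg_le_abs I]
        nlinarith [mul_le_mul_of_nonneg_left hIlow (le_of_lt ht0),
          mul_le_mul_of_nonneg_left hxtnorm (mul_nonneg (le_of_lt ht0) (le_of_lt hN0))]
      -- r ≤ δ
      have hrδ : r ≤ δ := by
        by_contra hrgt
        push_neg at hrgt
        have hxs0 : (0:ℝ) ≤ ‖xmin wstar‖ := norm_nonneg _
        have hrpos : 0 < r := lt_trans hδ0 hrgt
        have h_a := mul_le_mul_of_nonneg_right hquad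
          (by positivity : (0:ℝ) ≤ ‖xmin wstar‖ + δ)
        have h_b := mul_le_mul_of_nonneg_right ht2
          (by positivity : (0:ℝ) ≤ ‖xmin wstar‖ + r)
        have hint1 : 0 ≤ α * ‖xmin wstar‖ * ((r + δ) * (r - δ)) := by
          apply mul_nonneg (mul_nonneg (le_of_lt hα) hxs0)
          apply mul_nonneg (by linarith) (by linarith)
        have hint2 : 0 < α * δ * (r * (r - δ)) := by
          apply mul_pos (mul_pos hα hδ0)
          exact mul_pos hrpos (by linarith)
        nlinarith [h_a, h_b, hint1, hint2]
      -- I ≤ 0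
      have hIle : I ≤ 0 := by
        by_contra hpos
        push_neg at hpos
        nlinarith [mul_pos ht0 hpos, sq_nonneg r]
      -- conclude
      have hfinal : ⟪v - wstar, xmin wstar⟫ ≤ ‖v - wstar‖ * r := by
        have hsplit : ⟪v - wstar, xmin wstar⟫ =
            I + ⟪v - wstar, xmin wstar - xmin (wstar + t • (v - wstar))⟫ := by
          rw [hI, ← inner_add_right]
          congr 1
          module
        have hcs : ⟪v - wstar, xmin wstar - xmin (wstar + t • (v - wstar))⟫ ≤
            ‖v - wstar‖ * r := by
          have h5 := abs_real_inner_le_norm (v - wstar)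
            (xmin wstar - xmin (wstar + t • (v - wstar)))
          have h6 : ‖xmin wstar - xmin (wstar + t • (v - wstar))‖ = r := by
            rw [hr, norm_sub_rev]
          rw [h6] at h5
          linarith [le_abs_self ⟪v - wstar, xmin wstar - xmin (wstar + t • (v - wstar))⟫]
        linarith
      have hNr : ‖v - wstar‖ * r ≤ ε := by
        have hNδ : ‖v - wstar‖ * δ = ε := by
          rw [hδdef]; field_simp
        nlinarith [mul_le_mul_of_nonneg_left hrδ (le_of_lt hN0)]
      have hcon : ⟪v - wstar, xmin wstar⟫ ≤ ε := le_trans hfinal hNr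
      rw [inner_sub_left] at hcon
      linarith
  -- sup' equals ⟪wstar, xmin wstar⟫
  have hsup_eq : V.sup' hV (fun w => ⟪w, xmin wstar⟫) = ⟪wstar, xmin wstar⟫ := by
    apply le_antisymm
    · exact Finset.sup'_le hV _ hdanskin
    · exact hsup_bound (xmin wstar) wstar hwstarK
  refine ⟨xmin wstar, wstar, hwstarK, ?_, ?_, ?_⟩
  · intro y
    rw [hsup_eq]
    have h1 : g (xmin wstar) + ⟪wstar, xmin wstar⟫ ≤ g y + ⟪wstar, y⟫ := hxmin wstar y
    have h2 : ⟪wstar, y⟫ ≤ V.sup' hV (fun w => ⟪w, y⟫) := hsup_bound y wstar hwstarK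
    linarith
  · intro w hw
    rw [hfen w, hfen wstar]
    exact hmax w hw
  · rw [hfen wstar, hsup_eq, hφ_app]
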